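/- Let f : ℝ^d → ℝ be convex and differentiable with minimizer x⋆, and let X solve the gradient flow X' = -∇f(X). Then for all t ≥ 0, d/dt [t (f(X t) - f(x⋆)) + (1/2)‖X t - x⋆‖²] ≤ - t ‖∇f(X t)‖². -/

import Mathlib

open scoped RealInnerProductSpace
open Real Set

theorem gradient_flow_convex_lyapunov_derivative_bound
    (d : ℕ) (f : EuclideanSpace ℝ (Fin d) → ℝ) (hf : Differentiable ℝ f)
    (hconv : ∀ x y, f y ≥ f x + ⟪gradient f x, y - x⟫)
    (xstar : EuclideanSpace ℝ (Fin d)) (hmin : ∀ y, f xstar ≤ f y)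
    (X : ℝ → EuclideanSpace ℝ (Fin d))
    (hX : ∀ t, HasDerivAt X (-(gradient f (X t))) t) :
    ∀ t ≥ (0 : ℝ),
      deriv (fun s => s * (f (X s) - f xstar) + (1 / 2) * ‖X s - xstar‖ ^ 2) t ≤
        -t * ‖gradient f (X t)‖ ^ 2 := by
  intro t ht
  set g := gradient f (X t) with hg
  -- derivative of f ∘ X
  have hgrad : HasGradientAt f g (X t) := (hf (X t)).hasGradientAt
  have hfX : HasDerivAt (fun s => f (X s)) (⟪g, -g⟫) t := by
    have h := hgrad.hasFDerivAt.comp_hasDerivAt t (hX t); rw [InnerProductSpace.toDual_apply_apply] at h; exact h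
  have h1 : HasDerivAt (fun s => s * (f (X s) - f xstar))
      (1 * (f (X t) - f xstar) + t * ⟪g, -g⟫) t :=
    (hasDerivAt_id t).mul (hfX.sub_const _)
  have hXd : HasDerivAt (fun s => X s - xstar) (-g) t := (hX t).sub_const _
  have h2 : HasDerivAt (fun s => ⟪X s - xstar, X s - xstar⟫)
      (⟪X t - xstar, -g⟫ + ⟪-g, X t - xstar⟫) t := hXd.inner ℝ hXd
  have h2' : HasDerivAt (fun s => (1 / 2 : ℝ) * ‖X s - xstar‖ ^ 2)
      ((1 / 2) * (⟪X t - xstar, -g⟫ + ⟪-g, X t - xstar⟫)) t := by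
    have := h2.const_mul (1 / 2 : ℝ)
    have e : (fun s => (1 / 2 : ℝ) * ‖X s - xstar‖ ^ 2) = fun s => 1 / 2 * ⟪X s - xstar, X s - xstar⟫ := by
      funext s; rw [real_inner_self_eq_norm_sq]
    rw [e]; exact this
  have htot := h1.add h2'
  rw [(show HasDerivAt (fun s => s * (f (X s) - f xstar) + 1 / 2 * ‖X s - xstar‖ ^ 2) _ t from htot).deriv]
  have hconvex := hconv (X t) xstar
  have hkey : f (X t) - f xstar ≤ ⟪g, X t - xstar⟫ := by
    have : ⟪g, xstar - X t⟫ = -⟪g, X t - xstar⟫ := by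
      rw [← inner_neg_right]; congr 1; abel
    linarith [hconvex, this ▸ hconvex]
  have hnorm : ⟪g, g⟫ = ‖g‖ ^ 2 := real_inner_self_eq_norm_sq g
  have e1 : ⟪g, -g⟫ = -‖g‖ ^ 2 := by rw [inner_neg_right, hnorm]
  have e2 : ⟪X t - xstar, -g⟫ = -⟪g, X t - xstar⟫ := by
    rw [inner_neg_right, real_inner_comm]
  have e3 : ⟪-g, X t - xstar⟫ = -⟪g, X t - xstar⟫ := by rw [inner_neg_left]
  rw [e1, e2, e3]
  nlinarith [hkey]
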